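/- Let F be a field with more than d elements and n, d ≥ 1. Let f be a nonzero element of the unitization of F_{Ā,C̄}[X] whose F_{Ā,C̄}[X]-component has degree ≤ d. Then f is not a polynomial identity for the algebra A_d: there exist b_1, …, b_n ∈ A_d such that the evaluation of f at (b_1,…,b_n) — via the unique unital F-algebra homomorphism from the unitization of F_{Ā,C̄}[X] to A_d sending x_i ↦ b_i — is nonzero. -/

import Mathlib

noncomputable section

open scoped BigOperators

namespace NAPIT

/-- The list of (leaf label, leaf level) pairs of a nonassociative monomial (element of the
free magma), in left-to-right order, where the root of the monomial is at level `s`. -/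
def leafData {n : ℕ} : FreeMagma (Fin n) → ℕ → List (Fin n × ℕ)
  | FreeMagma.of i, s => [(i, s)]
  | FreeMagma.mul x y, s => leafData x (s + 1) ++ leafData y (s + 1)

/-- The degree (number of leaves) of a nonassociative monomial. -/
def degM {n : ℕ} : FreeMagma (Fin n) → ℕ
  | FreeMagma.of _ => 1
  | FreeMagma.mul x y => degM x + degM y

/-- The depth of a nonassociative monomial (root at level 1; the depth is the maximal level
of a leaf). -/
def depthM {n : ℕ} : FreeMagma (Fin n) → ℕ
  | FreeMagma.of _ => 1
  | FreeMagma.mul x y => max (depthM x) (depthM y) + 1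

/-- Evaluation of a nonassociative monomial at `b : Fin n → A`, using `mul` as the product on
`A`; this is the unique magma homomorphism `FreeMagma (Fin n) → (A, mul)` with `x_i ↦ b i`. -/
def evalWith {n : ℕ} {A : Type*} (mul : A → A → A) (b : Fin n → A) : FreeMagma (Fin n) → A
  | FreeMagma.of i => b i
  | FreeMagma.mul x y => mul (evalWith mul b x) (evalWith mul b y)

/-- The multiset of all variants `m_ε` of a monomial `m`, where `ε` ranges over all choices of
a Boolean for each internal node of `m`, and `m_ε` is obtained from `m` by swapping the two
children at exactly those internal nodes where `ε` is true (counted with multiplicity). -/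
def variants {n : ℕ} : FreeMagma (Fin n) → Multiset (FreeMagma (Fin n))
  | FreeMagma.of i => {FreeMagma.of i}
  | FreeMagma.mul x y =>
      (variants x).bind fun x' => (variants y).bind fun y' =>
        {FreeMagma.mul x' y', FreeMagma.mul y' x'}

/-- The underlying module of the algebra `A'_d(R)`: arrays `x[i,j,k]` with
`i, j ∈ Fin (d+1)`, `k ∈ Fin d` (zero-based; the paper's indices are shifted by one). -/
def Arr (d : ℕ) (R : Type*) : Type _ := Fin (d + 1) → Fin (d + 1) → Fin d → R

namespace Arr

variable {d : ℕ} {R : Type*}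

instance instAddCommGroup [AddCommGroup R] : AddCommGroup (Arr d R) :=
  inferInstanceAs (AddCommGroup (Fin (d + 1) → Fin (d + 1) → Fin d → R))

instance instModule {S : Type*} [Semiring S] [AddCommGroup R] [Module S R] :
    Module S (Arr d R) :=
  inferInstanceAs (Module S (Fin (d + 1) → Fin (d + 1) → Fin d → R))

/-- The bilinear product `∘` of `A'_d(R)`:
`(x ∘ y)[i,j,k] = ∑_{l} x[i,l,k+1] * y[l,j,k+1]` if `k+1` is a legal third index, else `0`. -/
def aprod [CommRing R] (x y : Arr d R) : Arr d R := fun i j k =>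
  if h : (k : ℕ) + 1 < d then
    ∑ l : Fin (d + 1), x i l ⟨(k : ℕ) + 1, h⟩ * y l j ⟨(k : ℕ) + 1, h⟩
  else 0

instance instMul [CommRing R] : Mul (Arr d R) := ⟨aprod⟩

end Arr

/-- The algebra `C'_d(R)`: same underlying module as `A'_d(R)`, with the anticommutator
product `a ⊙ b = a ∘ b + b ∘ a`. -/
def CArr (d : ℕ) (R : Type*) : Type _ := Arr d R

namespace CArr

variable {d : ℕ} {R : Type*}

/-- The identity map `A'_d(R) → C'_d(R)` of underlying modules. -/
def ofArr (x : Arr d R) : CArr d R := x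

/-- The identity map `C'_d(R) → A'_d(R)` of underlying modules. -/
def toArr (x : CArr d R) : Arr d R := x

instance instAddCommGroup [AddCommGroup R] : AddCommGroup (CArr d R) :=
  inferInstanceAs (AddCommGroup (Arr d R))

instance instModule {S : Type*} [Semiring S] [AddCommGroup R] [Module S R] :
    Module S (CArr d R) :=
  inferInstanceAs (Module S (Arr d R))

instance instMul [CommRing R] : Mul (CArr d R) :=
  ⟨fun a b => ofArr (toArr a * toArr b + toArr b * toArr a)⟩

end CArr

/-- The element `Z_i ∈ A'_d(R)`, `R = MvPolynomial (Fin n × Fin d × Fin d) F`, whose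
`(j, j+1, k)` entry is the indeterminate `z_{i,j,k}` and whose other entries vanish. -/
def Z (F : Type*) [CommRing F] (n d : ℕ) (i : Fin n) :
    Arr d (MvPolynomial (Fin n × Fin d × Fin d) F) := fun j j' k =>
  if h : (j : ℕ) < d ∧ (j' : ℕ) = (j : ℕ) + 1 then
    MvPolynomial.X (i, ⟨(j : ℕ), h.1⟩, k)
  else 0

/-- The element `Z_i` regarded as an element of `C'_d(R)`. -/
def ZC (F : Type*) [CommRing F] (n d : ℕ) (i : Fin n) :
    CArr d (MvPolynomial (Fin n × Fin d × Fin d) F) := CArr.ofArr (Z F n d i)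

/-- The monomial `∏_{t=1}^{d'} z_{σ_m(t), (t-1) + k1, (l^m_t - 1) + k2}` associated to a
nonassociative monomial `m` of degree `d'` and offsets `k1, k2` (all indices zero-based; the
paper's 1-based offsets are `k1 + 1`, `k2 + 1`).  Indices which would fall out of range are
discarded (this never happens in the intended range of parameters). -/
def monProd (F : Type*) [CommRing F] {n : ℕ} (d : ℕ) (k1 k2 : ℕ) (m : FreeMagma (Fin n)) :
    MvPolynomial (Fin n × Fin d × Fin d) F :=
  (((leafData m 1).zipIdx.map Prod.swap).map fun p =>
    if h : p.1 + k1 < d ∧ p.2.2 - 1 + k2 < d then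
      MvPolynomial.X (p.2.1, ⟨p.1 + k1, h.1⟩, ⟨p.2.2 - 1 + k2, h.2⟩)
    else 0).prod

/-- `ψ(m) = ∑_ε ∏_{t=1}^{d'} z_{σ_{m_ε}(t), t, l^{m_ε}_t}` (1-based), the sum running over all
choices `ε` of a Boolean for each internal node of `m`. -/
def psi (F : Type*) [CommRing F] {n : ℕ} (d : ℕ) (m : FreeMagma (Fin n)) :
    MvPolynomial (Fin n × Fin d × Fin d) F :=
  ((variants m).map fun m' => monProd F d 0 0 m').sum

/-- The coefficient function of an element of the free nonunital nonassociative algebra. -/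
def coeffOf {F : Type*} [Semiring F] {n : ℕ}
    (f : FreeNonUnitalNonAssocAlgebra F (Fin n)) : FreeMagma (Fin n) →₀ F := f.coeff

/-- Evaluation of an element of the free nonunital nonassociative algebra on `x_1, …, x_n` at
the tuple `b`, with `mul` as the product of the target: the linear extension of
`m ↦ evalWith mul b m`, i.e. the unique nonunital `F`-algebra homomorphism sending
`x_i ↦ b i` into `(A, mul)`. -/
def evalNAWith {F : Type*} [Semiring F] {n : ℕ} {A : Type*}
    [AddCommMonoid A] [Module F A] (mul : A → A → A) (b : Fin n → A)
    (f : FreeNonUnitalNonAssocAlgebra F (Fin n)) : A :=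
  Finsupp.sum (coeffOf f) fun m c => c • evalWith mul b m

/-- Evaluation of an element of the free nonunital nonassociative algebra at a tuple `b` of
elements of a (not necessarily unital/associative) algebra `A`: the unique nonunital
`F`-algebra homomorphism sending `x_i ↦ b i`. -/
def evalNA {F : Type*} [Semiring F] {n : ℕ} {A : Type*}
    [AddCommMonoid A] [Mul A] [Module F A] (b : Fin n → A)
    (f : FreeNonUnitalNonAssocAlgebra F (Fin n)) : A :=
  evalNAWith (· * ·) b f

/-- Evaluation of an element of the unitization of the free nonunital nonassociative algebra
at a tuple `b` of elements of the unitization of `A`: the unique unital `F`-algebra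
homomorphism sending `x_i ↦ b i` (and the adjoined unit to the unit). -/
def evalUnit {F : Type*} [CommSemiring F] {n : ℕ} {A : Type*}
    [AddCommMonoid A] [Mul A] [Module F A] (b : Fin n → Unitization F A)
    (f : Unitization F (FreeNonUnitalNonAssocAlgebra F (Fin n))) : Unitization F A :=
  Unitization.inl f.fst + evalNA b f.snd

/-- The commutativity congruence on the free magma: the smallest equivalence relation with
`m₁ * m₂ ≈ m₂ * m₁` and compatible with the product. -/
inductive CommEq {n : ℕ} : FreeMagma (Fin n) → FreeMagma (Fin n) → Prop
  | refl (m : FreeMagma (Fin n)) : CommEq m m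
  | symm {a b : FreeMagma (Fin n)} : CommEq a b → CommEq b a
  | trans {a b c : FreeMagma (Fin n)} : CommEq a b → CommEq b c → CommEq a c
  | comm (a b : FreeMagma (Fin n)) : CommEq (a * b) (b * a)
  | mul_congr {a a' b b' : FreeMagma (Fin n)} :
      CommEq a a' → CommEq b b' → CommEq (a * b) (a' * b')

/-- The basis monomial `m` of the free nonunital nonassociative algebra. -/
def single1 (F : Type*) [Semiring F] {n : ℕ} (m : FreeMagma (Fin n)) :
    FreeNonUnitalNonAssocAlgebra F (Fin n) :=
  MonoidAlgebra.ofCoeff (Finsupp.single m 1 : FreeMagma (Fin n) →₀ F)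

/-- `I_comm`: the `F`-linear span of `{m − m' : m ≈ m'}` inside the free nonunital
nonassociative algebra. -/
def Icomm (F : Type*) [Field F] (n : ℕ) :
    Submodule F (FreeNonUnitalNonAssocAlgebra F (Fin n)) :=
  Submodule.span F
    {x | ∃ m m' : FreeMagma (Fin n), CommEq m m' ∧ x = single1 F m - single1 F m'}


/-! ### Auxiliary lemmas -/

section Aux

@[simp] lemma degM_of {n : ℕ} (i : Fin n) : degM (FreeMagma.of i) = 1 := rfl
@[simp] lemma degM_mul' {n : ℕ} (x y : FreeMagma (Fin n)) :
    degM (x * y) = degM x + degM y := rfl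
@[simp] lemma depthM_of {n : ℕ} (i : Fin n) : depthM (FreeMagma.of i) = 1 := rfl
@[simp] lemma depthM_mul' {n : ℕ} (x y : FreeMagma (Fin n)) :
    depthM (x * y) = max (depthM x) (depthM y) + 1 := rfl
lemma leafData_of {n : ℕ} (i : Fin n) (s : ℕ) : leafData (FreeMagma.of i) s = [(i, s)] := rfl
lemma leafData_mul' {n : ℕ} (x y : FreeMagma (Fin n)) (s : ℕ) :
    leafData (x * y) s = leafData x (s+1) ++ leafData y (s+1) := rfl
lemma evalWith_of {n : ℕ} {A : Type*} (mul : A → A → A) (b : Fin n → A) (i : Fin n) :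
    evalWith mul b (FreeMagma.of i) = b i := rfl
lemma evalWith_mul' {n : ℕ} {A : Type*} (mul : A → A → A) (b : Fin n → A)
    (x y : FreeMagma (Fin n)) :
    evalWith mul b (x * y) = mul (evalWith mul b x) (evalWith mul b y) := rfl

lemma one_le_degM {n : ℕ} (m : FreeMagma (Fin n)) : 1 ≤ degM m := by
  induction m with
  | ih1 i => simp
  | ih2 x y ihx ihy => simp only [degM_mul']; omega

lemma one_le_depthM {n : ℕ} (m : FreeMagma (Fin n)) : 1 ≤ depthM m := by
  induction m with
  | ih1 i => simp
  | ih2 x y ihx ihy => simp only [depthM_mul']; omega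

lemma depthM_le_degM {n : ℕ} (m : FreeMagma (Fin n)) : depthM m ≤ degM m := by
  induction m with
  | ih1 i => simp
  | ih2 x y ihx ihy =>
    have h1 := one_le_degM x
    have h2 := one_le_degM y
    simp only [depthM_mul', degM_mul']
    omega

lemma leafData_length {n : ℕ} (m : FreeMagma (Fin n)) (s : ℕ) :
    (leafData m s).length = degM m := by
  induction m generalizing s with
  | ih1 i => simp [leafData_of]
  | ih2 x y ihx ihy => simp [leafData_mul', ihx, ihy]

lemma level_mem {n : ℕ} (m : FreeMagma (Fin n)) (s : ℕ) :
    ∀ p ∈ leafData m s, s ≤ p.2 ∧ p.2 < s + depthM m := by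
  induction m generalizing s with
  | ih1 i =>
    intro p hp
    simp only [leafData_of, List.mem_singleton] at hp
    subst hp; simp
  | ih2 x y ihx ihy =>
    intro p hp
    simp only [leafData_mul', List.mem_append] at hp
    rcases hp with hp | hp
    · have := ihx (s + 1) p hp
      have hmax : depthM x ≤ max (depthM x) (depthM y) := le_max_left _ _
      simp only [depthM_mul']; omega
    · have := ihy (s + 1) p hp
      have hmax : depthM y ≤ max (depthM x) (depthM y) := le_max_right _ _
      simp only [depthM_mul']; omega

lemma leafData_succ {n : ℕ} (m : FreeMagma (Fin n)) (s : ℕ) :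
    leafData m (s + 1) = (leafData m s).map (fun p => (p.1, p.2 + 1)) := by
  induction m generalizing s with
  | ih1 i => simp [leafData_of]
  | ih2 x y ihx ihy => simp [leafData_mul', ihx, ihy]

/-- Kraft sum of a list of leaf data. -/
def kraft {n : ℕ} (L : List (Fin n × ℕ)) : ℚ :=
  (L.map fun p => (2 : ℚ) ^ (-(p.2 : ℤ))).sum

lemma kraft_append {n : ℕ} (A B : List (Fin n × ℕ)) :
    kraft (A ++ B) = kraft A + kraft B := by
  simp [kraft]

lemma kraft_half (s : ℕ) :
    (2 : ℚ) ^ (-(((s+1) : ℕ) : ℤ)) + (2 : ℚ) ^ (-(((s+1) : ℕ) : ℤ)) = (2 : ℚ) ^ (-(s : ℤ)) := by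
  rw [← two_mul, show (-(s : ℤ)) = 1 + (-(((s+1):ℕ) : ℤ)) by push_cast; ring,
    zpow_add₀ (two_ne_zero), zpow_one]

lemma kraft_pos (s : ℕ) : (0 : ℚ) < (2 : ℚ) ^ (-(s : ℤ)) := by positivity

lemma kraft_leafData {n : ℕ} (m : FreeMagma (Fin n)) (s : ℕ) :
    kraft (leafData m s) = (2 : ℚ) ^ (-(s : ℤ)) := by
  induction m generalizing s with
  | ih1 i => simp [kraft, leafData_of]
  | ih2 x y ihx ihy =>
    rw [leafData_mul', kraft_append, ihx, ihy, kraft_half]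

lemma kraft_prefix_lt {n : ℕ} (m : FreeMagma (Fin n)) (s : ℕ) (P : List (Fin n × ℕ))
    (hP : P <+: leafData m s) (hlen : P.length < (leafData m s).length) :
    kraft P < (2 : ℚ) ^ (-(s : ℤ)) := by
  induction m generalizing s P with
  | ih1 i =>
    have : P = [] := by
      have h1 : (leafData (FreeMagma.of i) s).length = 1 := by simp [leafData_of]
      rw [h1] at hlen
      exact List.length_eq_zero_iff.mp (by omega)
    subst this
    simpa [kraft] using kraft_pos s
  | ih2 x y ihx ihy =>
    rw [leafData_mul'] at hP hlen
    set A := leafData x (s+1) with hA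
    set B := leafData y (s+1) with hB
    have key : kraft P ≤ (2 : ℚ) ^ (-(((s+1):ℕ):ℤ)) + (2 : ℚ) ^ (-(((s+1):ℕ):ℤ)) ∧
        kraft P ≠ (2 : ℚ) ^ (-(((s+1):ℕ):ℤ)) + (2 : ℚ) ^ (-(((s+1):ℕ):ℤ)) := by
      have hpos := kraft_pos (s+1)
      rcases le_or_gt P.length A.length with h | h
      · have hPA : P <+: A :=
          List.prefix_of_prefix_length_le hP (A.prefix_append B) h
        rcases eq_or_lt_of_le h with he | hlt
        · have hPeq : P = A := hPA.eq_of_length he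
          subst hPeq
          rw [hA, kraft_leafData x (s+1)]
          exact ⟨by linarith, by intro hc; linarith⟩
        · have := ihx (s+1) P hPA hlt
          exact ⟨by linarith, by intro hc; linarith⟩
      · have hAP : A <+: P := List.prefix_of_prefix_length_le (A.prefix_append B) hP h.le
        obtain ⟨Q, rfl⟩ := hAP
        have hQB : Q <+: B := by
          obtain ⟨R, hR⟩ := hP
          rw [List.append_assoc] at hR
          exact ⟨R, List.append_cancel_left hR⟩
        have hQlen : Q.length < B.length := by
          simp only [List.length_append] at hlen; omega
        have hQ := ihy (s+1) Q hQB hQlen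
        have hkA : kraft A = (2 : ℚ) ^ (-(((s+1):ℕ):ℤ)) := by
          rw [hA, kraft_leafData x (s+1)]
        rw [kraft_append, hkA]
        exact ⟨by linarith, by intro hc; linarith⟩
    rw [← kraft_half s]
    exact lt_of_le_of_ne key.1 key.2

lemma leafData_injective {n : ℕ} :
    ∀ {m m' : FreeMagma (Fin n)} {s : ℕ}, leafData m s = leafData m' s → m = m' := by
  intro m
  induction m with
  | ih1 i =>
    intro m' s h
    cases m' with
    | of i' =>
      simp only [leafData_of, List.cons.injEq, Prod.mk.injEq] at h
      rw [h.1.1]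
    | mul x' y' =>
      exfalso
      have h1 := congrArg List.length h
      rw [leafData_length, leafData_length] at h1
      have := one_le_degM x'; have := one_le_degM y'
      simp only [degM_of] at h1
      rw [show degM (FreeMagma.mul x' y') = degM x' + degM y' from rfl] at h1
      omega
  | ih2 x y ihx ihy =>
    intro m' s h
    cases m' with
    | of i' =>
      exfalso
      have h1 := congrArg List.length h
      rw [leafData_length, leafData_length] at h1
      have := one_le_degM x; have := one_le_degM y
      rw [show degM (FreeMagma.of i') = 1 from rfl,
        show degM (x * y) = degM x + degM y from rfl] at h1
      omega
    | mul x' y' =>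
      have h' : leafData x (s+1) ++ leafData y (s+1)
          = leafData x' (s+1) ++ leafData y' (s+1) := h
      have hlen : (leafData x (s+1)).length = (leafData x' (s+1)).length := by
        by_contra hne
        rcases lt_or_gt_of_ne hne with hlt | hgt
        · have hpre : leafData x (s+1) <+: leafData x' (s+1) :=
            List.prefix_of_prefix_length_le
              (⟨leafData y (s+1), h'⟩)
              ((leafData x' (s+1)).prefix_append _) hlt.le
          have := kraft_prefix_lt x' (s+1) _ hpre hlt
          rw [kraft_leafData] at this
          exact lt_irrefl _ this
        · have hpre : leafData x' (s+1) <+: leafData x (s+1) :=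
            List.prefix_of_prefix_length_le
              (⟨leafData y' (s+1), h'.symm⟩)
              ((leafData x (s+1)).prefix_append _) hgt.le
          have := kraft_prefix_lt x (s+1) _ hpre hgt
          rw [kraft_leafData] at this
          exact lt_irrefl _ this
      obtain ⟨hxx, hyy⟩ := List.append_inj h' hlen
      show x * y = FreeMagma.mul x' y'
      rw [ihx hxx, ihy hyy]
      rfl

end Aux


section Aux2

variable {F : Type*} [CommRing F] {n d : ℕ}

/-- Cons-recursive form of the factor list of `monProd`. -/
def facs (F : Type*) [CommRing F] {n : ℕ} (d k1 k2 : ℕ) :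
    List (Fin n × ℕ) → ℕ → List (MvPolynomial (Fin n × Fin d × Fin d) F)
  | [], _ => []
  | p :: L, t =>
      (if h : t + k1 < d ∧ p.2 - 1 + k2 < d then
        MvPolynomial.X (p.1, ⟨t + k1, h.1⟩, ⟨p.2 - 1 + k2, h.2⟩) else 0)
        :: facs F d k1 k2 L (t + 1)

/-- The exponent finsupp corresponding to `facs`. -/
def expFacs (d k1 k2 : ℕ) {n : ℕ} :
    List (Fin n × ℕ) → ℕ → ((Fin n × Fin d × Fin d) →₀ ℕ)
  | [], _ => 0
  | p :: L, t =>
      (if h : t + k1 < d ∧ p.2 - 1 + k2 < d then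
        Finsupp.single (p.1, (⟨t + k1, h.1⟩ : Fin d), (⟨p.2 - 1 + k2, h.2⟩ : Fin d)) 1 else 0)
        + expFacs d k1 k2 L (t + 1)

lemma monProd_eq_facs (k1 k2 : ℕ) (m : FreeMagma (Fin n)) :
    monProd F d k1 k2 m = (facs F d k1 k2 (leafData m 1) 0).prod := by
  have key : ∀ (L : List (Fin n × ℕ)) (t : ℕ),
      (((L.zipIdx t).map Prod.swap).map fun p =>
        if h : p.1 + k1 < d ∧ p.2.2 - 1 + k2 < d then
          (MvPolynomial.X (p.2.1, ⟨p.1 + k1, h.1⟩, ⟨p.2.2 - 1 + k2, h.2⟩) :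
            MvPolynomial (Fin n × Fin d × Fin d) F)
        else 0) = facs F d k1 k2 L t := by
    intro L
    induction L with
    | nil => intro t; rfl
    | cons p L ih =>
      intro t
      rw [List.zipIdx_cons, List.map_cons, List.map_cons, ih]
      rfl
  rw [monProd]
  rw [key]

lemma facs_append (k1 k2 : ℕ) (A B : List (Fin n × ℕ)) (t : ℕ) :
    facs F d k1 k2 (A ++ B) t = facs F d k1 k2 A t ++ facs F d k1 k2 B (t + A.length) := by
  induction A generalizing t with
  | nil => simp [facs]
  | cons p A ih =>
    have e : t + (p :: A).length = t + 1 + A.length := by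
      simp only [List.length_cons]; omega
    rw [List.cons_append, facs, facs, ih (t + 1), List.cons_append, e]

lemma facs_shift (k1 k2 : ℕ) (L : List (Fin n × ℕ)) (hL : ∀ p ∈ L, 1 ≤ p.2) (t : ℕ) :
    facs F d k1 k2 (L.map fun p => (p.1, p.2 + 1)) t = facs F d k1 (k2 + 1) L t := by
  induction L generalizing t with
  | nil => rfl
  | cons p L ih =>
    rw [List.map_cons, facs, facs, ih (fun q hq => hL q (List.mem_cons_of_mem _ hq)) (t + 1)]
    congr 1
    have h1 : 1 ≤ p.2 := hL p List.mem_cons_self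
    have e : p.2 + 1 - 1 + k2 = p.2 - 1 + (k2 + 1) := by omega
    simp only [e]

lemma facs_offset (k1 k2 c : ℕ) (L : List (Fin n × ℕ)) (t : ℕ) :
    facs F d k1 k2 L (t + c) = facs F d (k1 + c) k2 L t := by
  induction L generalizing t with
  | nil => rfl
  | cons p L ih =>
    rw [facs, facs, show t + c + 1 = t + 1 + c by omega, ih (t + 1)]
    congr 1
    simp only [show t + c + k1 = t + (k1 + c) by omega]

lemma monProd_mul (k1 k2 : ℕ) (x y : FreeMagma (Fin n)) :
    monProd F d k1 k2 (FreeMagma.mul x y)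
      = monProd F d k1 (k2 + 1) x * monProd F d (k1 + degM x) (k2 + 1) y := by
  rw [monProd_eq_facs, monProd_eq_facs, monProd_eq_facs]
  rw [show leafData (FreeMagma.mul x y) 1 = leafData x (1+1) ++ leafData y (1+1) from rfl]
  rw [facs_append, List.prod_append]
  congr 1
  · rw [leafData_succ x 1, facs_shift k1 k2 _ (fun p hp => (level_mem x 1 p hp).1) 0]
  · rw [leafData_succ y 1, facs_shift k1 k2 _ (fun p hp => (level_mem y 1 p hp).1),
      leafData_length, facs_offset k1 (k2+1) (degM x) _ 0]

lemma facs_prod_eq_monomial (k1 k2 : ℕ) (L : List (Fin n × ℕ)) (t : ℕ)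
    (h1 : t + k1 + L.length ≤ d) (h2 : ∀ p ∈ L, p.2 - 1 + k2 < d) :
    (facs F d k1 k2 L t).prod = MvPolynomial.monomial (expFacs d k1 k2 L t) 1 := by
  induction L generalizing t with
  | nil => simp [facs, expFacs]
  | cons p L ih =>
    have hc : t + k1 < d ∧ p.2 - 1 + k2 < d :=
      ⟨by simp only [List.length_cons] at h1; omega, h2 p List.mem_cons_self⟩
    rw [facs, expFacs, dif_pos hc, dif_pos hc, List.prod_cons,
      ih (t + 1) (by simp only [List.length_cons] at h1; omega)
        (fun q hq => h2 q (List.mem_cons_of_mem _ hq))]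
    rw [MvPolynomial.X, MvPolynomial.monomial_mul, one_mul]

lemma expFacs_degree (k1 k2 : ℕ) (L : List (Fin n × ℕ)) (t : ℕ)
    (h1 : t + k1 + L.length ≤ d) (h2 : ∀ p ∈ L, p.2 - 1 + k2 < d) :
    (expFacs d (n := n) k1 k2 L t).degree = L.length := by
  induction L generalizing t with
  | nil => simp [expFacs]
  | cons p L ih =>
    have hc : t + k1 < d ∧ p.2 - 1 + k2 < d :=
      ⟨by simp only [List.length_cons] at h1; omega, h2 p List.mem_cons_self⟩
    rw [expFacs, dif_pos hc, Finsupp.degree_eq_weight_one, map_add,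
      ← Finsupp.degree_eq_weight_one,
      ih (t + 1) (by simp only [List.length_cons] at h1; omega)
        (fun q hq => h2 q (List.mem_cons_of_mem _ hq))]
    rw [Finsupp.degree_eq_weight_one]
    have : (Finsupp.weight fun _ => 1) (Finsupp.single
        (p.1, (⟨t + k1, hc.1⟩ : Fin d), (⟨p.2 - 1 + k2, hc.2⟩ : Fin d)) 1) = 1 := by
      rw [Finsupp.weight_apply, Finsupp.sum_single_index] <;> simp
    rw [this, List.length_cons]
    omega

lemma expFacs_pos (k1 k2 : ℕ) (L : List (Fin n × ℕ)) (t j : ℕ) (hj : j < L.length)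
    (h1 : t + j + k1 < d) (h2 : (L[j]'hj).2 - 1 + k2 < d) :
    1 ≤ expFacs d k1 k2 L t
      ((L[j]'hj).1, (⟨t + j + k1, h1⟩ : Fin d), (⟨(L[j]'hj).2 - 1 + k2, h2⟩ : Fin d)) := by
  induction L generalizing t j with
  | nil => simp at hj
  | cons p L ih =>
    cases j with
    | zero =>
      have hc : t + k1 < d ∧ p.2 - 1 + k2 < d := ⟨by omega, by simpa using h2⟩
      show 1 ≤ expFacs d k1 k2 (p :: L) t (p.1, (⟨t + k1, hc.1⟩ : Fin d),
        (⟨p.2 - 1 + k2, hc.2⟩ : Fin d))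
      rw [expFacs, Finsupp.add_apply, dif_pos hc, Finsupp.single_eq_same]
      omega
    | succ j =>
      have hj' : j < L.length := by simpa using hj
      have h1' : t + 1 + j + k1 < d := by omega
      have h2' : (L[j]'hj').2 - 1 + k2 < d := by simpa using h2
      show 1 ≤ expFacs d k1 k2 (p :: L) t ((L[j]'hj').1,
        (⟨t + (j+1) + k1, h1⟩ : Fin d), (⟨(L[j]'hj').2 - 1 + k2, h2'⟩ : Fin d))
      have e : (⟨t + (j+1) + k1, h1⟩ : Fin d) = ⟨t + 1 + j + k1, h1'⟩ := by
        apply Fin.ext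
        show t + (j+1) + k1 = t + 1 + j + k1
        omega
      rw [e, expFacs, Finsupp.add_apply]
      exact le_trans (ih (t+1) j hj' h1' h2') (Nat.le_add_left _ _)

lemma expFacs_support (k1 k2 : ℕ) (L : List (Fin n × ℕ)) (t : ℕ)
    (v : Fin n × Fin d × Fin d) (h : expFacs d k1 k2 L t v ≠ 0) :
    ∃ j, ∃ hj : j < L.length, v.1 = (L[j]'hj).1 ∧ (v.2.1 : ℕ) = t + j + k1
      ∧ (v.2.2 : ℕ) = (L[j]'hj).2 - 1 + k2 := by
  induction L generalizing t with
  | nil => simp [expFacs] at h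
  | cons p L ih =>
    rw [expFacs, Finsupp.add_apply] at h
    rcases Nat.eq_zero_or_pos ((if h : t + k1 < d ∧ p.2 - 1 + k2 < d then
        Finsupp.single (p.1, (⟨t + k1, h.1⟩ : Fin d), (⟨p.2 - 1 + k2, h.2⟩ : Fin d)) 1
        else 0) v) with h0 | hpos
    · have : expFacs d k1 k2 L (t+1) v ≠ 0 := by omega
      obtain ⟨j, hj, he1, he2, he3⟩ := ih (t+1) this
      exact ⟨j + 1, by simpa using hj, by simpa using he1, by omega, by simpa using he3⟩
    · by_cases hc : t + k1 < d ∧ p.2 - 1 + k2 < d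
      · rw [dif_pos hc, Finsupp.single_apply] at hpos
        have hv : (p.1, (⟨t + k1, hc.1⟩ : Fin d), (⟨p.2 - 1 + k2, hc.2⟩ : Fin d)) = v := by
          by_contra hne
          rw [if_neg hne] at hpos
          omega
        refine ⟨0, by simp, ?_, ?_, ?_⟩ <;> rw [← hv]
        · rfl
        · show ((⟨t + k1, hc.1⟩ : Fin d) : ℕ) = t + 0 + k1
          simp
        · rfl
      · rw [dif_neg hc] at hpos
        simp at hpos

end Aux2


section Aux3

variable {F : Type*} [CommRing F] {n d : ℕ}

lemma aprod_apply {R : Type*} [CommRing R] (x y : Arr d R) (i j : Fin (d+1)) (k : Fin d) :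
    (x * y) i j k = if h : (k : ℕ) + 1 < d then
      ∑ l : Fin (d + 1), x i l ⟨(k : ℕ) + 1, h⟩ * y l j ⟨(k : ℕ) + 1, h⟩ else 0 := rfl

lemma monProd_mul'' (k1 k2 : ℕ) (x y : FreeMagma (Fin n)) :
    monProd F d k1 k2 (x * y)
      = monProd F d k1 (k2 + 1) x * monProd F d (k1 + degM x) (k2 + 1) y :=
  monProd_mul k1 k2 x y

lemma evalZ_entry (m : FreeMagma (Fin n)) (i j : Fin (d+1)) (k : Fin d)
    (hk : (k : ℕ) + depthM m ≤ d) :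
    evalWith (· * ·) (Z F n d) m i j k =
      if (j : ℕ) = (i : ℕ) + degM m then monProd F d (i : ℕ) (k : ℕ) m else 0 := by
  induction m generalizing i j k with
  | ih1 i0 =>
    rw [evalWith_of, degM_of]
    show (if h : (i : ℕ) < d ∧ (j : ℕ) = (i : ℕ) + 1 then
        (MvPolynomial.X ((i0, ⟨(i : ℕ), h.1⟩, k) : Fin n × Fin d × Fin d) :
          MvPolynomial (Fin n × Fin d × Fin d) F) else 0)
      = if (j : ℕ) = (i : ℕ) + 1 then monProd F d (i : ℕ) (k : ℕ) (FreeMagma.of i0) else 0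
    by_cases hj : (j : ℕ) = (i : ℕ) + 1
    · have hi : (i : ℕ) < d := by have := j.isLt; omega
      rw [dif_pos ⟨hi, hj⟩, if_pos hj, monProd_eq_facs]
      show _ = (facs F d (i : ℕ) (k : ℕ) [(i0, 1)] 0).prod
      have hc : 0 + (i : ℕ) < d ∧ 1 - 1 + (k : ℕ) < d := ⟨by omega, by have := k.isLt; omega⟩
      simp only [facs]
      rw [dif_pos hc, List.prod_cons, List.prod_nil, mul_one]
      refine congrArg _ ?_
      refine Prod.ext rfl (Prod.ext ?_ ?_)
      · apply Fin.ext
        show (i : ℕ) = 0 + (i : ℕ)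
        omega
      · apply Fin.ext
        show (k : ℕ) = 1 - 1 + (k : ℕ)
        omega
    · rw [dif_neg (fun hcon => hj hcon.2), if_neg hj]
  | ih2 x y ihx ihy =>
    rw [evalWith_mul']
    have hdx := one_le_depthM x
    have hdy := one_le_depthM y
    have hmx := le_max_left (depthM x) (depthM y)
    have hmy := le_max_right (depthM x) (depthM y)
    simp only [depthM_mul'] at hk
    have hk1 : (k : ℕ) + 1 < d := by omega
    rw [aprod_apply, dif_pos hk1]
    have hkx : ((⟨(k:ℕ)+1, hk1⟩ : Fin d) : ℕ) + depthM x ≤ d := by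
      show (k : ℕ) + 1 + depthM x ≤ d; omega
    have hky : ((⟨(k:ℕ)+1, hk1⟩ : Fin d) : ℕ) + depthM y ≤ d := by
      show (k : ℕ) + 1 + depthM y ≤ d; omega
    have hx : ∀ l : Fin (d+1), evalWith (· * ·) (Z F n d) x i l ⟨(k:ℕ)+1, hk1⟩
        = if (l : ℕ) = (i : ℕ) + degM x
          then monProd F d (i : ℕ) (((⟨(k:ℕ)+1, hk1⟩ : Fin d)) : ℕ) x else 0 :=
      fun l => ihx i l ⟨(k:ℕ)+1, hk1⟩ hkx
    have hy : ∀ l : Fin (d+1), evalWith (· * ·) (Z F n d) y l j ⟨(k:ℕ)+1, hk1⟩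
        = if (j : ℕ) = (l : ℕ) + degM y
          then monProd F d (l : ℕ) (((⟨(k:ℕ)+1, hk1⟩ : Fin d)) : ℕ) y else 0 :=
      fun l => ihy l j ⟨(k:ℕ)+1, hk1⟩ hky
    simp only [hx, hy]
    by_cases hix : (i : ℕ) + degM x < d + 1
    · rw [Finset.sum_eq_single (⟨(i : ℕ) + degM x, hix⟩ : Fin (d+1))]
      · rw [if_pos rfl, mul_ite, mul_zero, degM_mul', monProd_mul'']
        apply if_congr _ _ rfl
        · rw [show ((⟨(i : ℕ) + degM x, hix⟩ : Fin (d+1)) : ℕ) = (i : ℕ) + degM x from rfl]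
          omega
        · rfl
      · intro l _ hlne
        rw [if_neg, zero_mul]
        intro hle
        exact hlne (Fin.ext hle)
      · intro habs
        exact absurd (Finset.mem_univ _) habs
    · have hje : ¬ ((j : ℕ) = (i : ℕ) + degM (x * y)) := by
        have := j.isLt
        have := one_le_degM y
        simp only [degM_mul']
        omega
      rw [if_neg hje, Finset.sum_eq_zero]
      intro l _
      rw [if_neg (by have := l.isLt; omega), zero_mul]

/-- Entrywise evaluation of an array of polynomials at a point. -/
def mapArrEval (z : (Fin n × Fin d × Fin d) → F)
    (x : Arr d (MvPolynomial (Fin n × Fin d × Fin d) F)) : Arr d F :=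
  fun i j k => MvPolynomial.eval z (x i j k)

lemma mapArrEval_mul (z : (Fin n × Fin d × Fin d) → F)
    (x y : Arr d (MvPolynomial (Fin n × Fin d × Fin d) F)) :
    mapArrEval z (x * y) = mapArrEval z x * mapArrEval z y := by
  funext i j k
  show MvPolynomial.eval z ((x * y) i j k) = (mapArrEval z x * mapArrEval z y) i j k
  rw [aprod_apply, aprod_apply]
  split
  · rw [map_sum]
    exact Finset.sum_congr rfl fun l _ => map_mul _ _ _
  · rw [map_zero]

lemma evalWith_mapArrEval (z : (Fin n × Fin d × Fin d) → F) (m : FreeMagma (Fin n)) :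
    evalWith (· * ·) (fun i => mapArrEval z (Z F n d i)) m
      = mapArrEval z (evalWith (· * ·) (Z F n d) m) := by
  induction m with
  | ih1 i => rfl
  | ih2 x y ihx ihy =>
    rw [evalWith_mul', evalWith_mul', ihx, ihy, mapArrEval_mul]

lemma arr_zero_mul_zero {R : Type*} [CommRing R] : ((0 : Arr d R) * 0) = 0 := by
  funext i j k
  rw [aprod_apply]
  have h0 : ∀ (a b : Fin (d+1)) (c : Fin d), (0 : Arr d R) a b c = (0 : R) := fun _ _ _ => rfl
  split
  · simp [h0]
  · exact (h0 i j k).symm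

end Aux3

/-- Lemma 3.2 / `lowerBound`.  Let `F` be a field with more than `d`
elements, `n, d ≥ 1`.  Let `f` be a nonzero element of the unitization of `F_{Ā,C̄}[X]` whose
`F_{Ā,C̄}[X]`-component has degree `≤ d`.  Then `f` is not a polynomial identity for the
unital nonassociative algebra `A_d = Unitization F (A'_d(F))`: there exist
`b_1, …, b_n ∈ A_d` such that the evaluation of `f` at `(b_1, …, b_n)` (via the unique unital
`F`-algebra homomorphism sending `x_i ↦ b_i` and the adjoined unit to the unit of `A_d`) is
nonzero. -/
theorem not_PI_for_Ad {F : Type*} [Field F] (n d : ℕ) (hn : 1 ≤ n) (hd : 1 ≤ d)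
    (hF : (d : Cardinal) < Cardinal.mk F)
    (f : Unitization F (FreeNonUnitalNonAssocAlgebra F (Fin n))) (hf : f ≠ 0)
    (hdeg : ∀ m ∈ (coeffOf f.snd).support, degM m ≤ d) :
    ∃ b : Fin n → Unitization F (Arr d F), evalUnit b f ≠ 0 := by
  classical
  by_cases hfst : f.fst = 0
  case neg =>
    refine ⟨fun _ => 0, ?_⟩
    have hz : ∀ m : FreeMagma (Fin n),
        evalWith (· * ·) (fun _ : Fin n => (0 : Unitization F (Arr d F))) m = 0 := by
      intro m
      induction m with
      | ih1 i => rfl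
      | ih2 x y ihx ihy =>
        rw [evalWith_mul', ihx, ihy]
        apply Unitization.ext
        · simp [Unitization.fst_mul]
        · rw [Unitization.snd_mul]
          simp [Unitization.snd_zero, Unitization.fst_zero, arr_zero_mul_zero]
    have hNA : evalNA (fun _ : Fin n => (0 : Unitization F (Arr d F))) f.snd = 0 := by
      rw [evalNA, evalNAWith, Finsupp.sum]
      apply Finset.sum_eq_zero
      intro m _
      rw [hz m, smul_zero]
    rw [evalUnit, hNA, add_zero]
    intro hcon
    apply hfst
    have := congrArg (fun x : Unitization F (Arr d F) => x.fst) hcon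
    simpa using this
  case pos =>
    have hsnd : f.snd ≠ 0 := by
      intro h
      apply hf
      rw [← Unitization.inl_fst_add_inr_snd_eq f, hfst, h, Unitization.inl_zero,
        Unitization.inr_zero, add_zero]
    set c : FreeMagma (Fin n) →₀ F := coeffOf f.snd with hc
    have hcne : c ≠ 0 := MonoidAlgebra.coeff_eq_zero.not.mpr hsnd
    obtain ⟨m₀, hm₀⟩ := Finsupp.support_nonempty_iff.mpr hcne
    have hdm₀ : degM m₀ ≤ d := hdeg m₀ hm₀
    have hj0 : degM m₀ < d + 1 := by omega
    set i0 : Fin (d+1) := ⟨0, by omega⟩ with hi0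
    set jf : Fin (d+1) := ⟨degM m₀, hj0⟩ with hjf
    set k0 : Fin d := ⟨0, hd⟩ with hk0
    set P : MvPolynomial (Fin n × Fin d × Fin d) F :=
      ∑ m ∈ c.support, c m • (if degM m₀ = 0 + degM m then monProd F d 0 0 m else 0) with hP
    have hlev : ∀ m ∈ c.support, ∀ p ∈ leafData m 1, p.2 - 1 + 0 < d := by
      intro m hm p hp
      have h1 := (level_mem m 1 p hp).1
      have h2 := (level_mem m 1 p hp).2
      have h3 := depthM_le_degM m
      have h4 := hdeg m hm
      omega
    have hlen : ∀ m ∈ c.support, (0:ℕ) + 0 + (leafData m 1).length ≤ d := by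
      intro m hm
      rw [leafData_length]
      have := hdeg m hm
      omega
    have hmon : ∀ m ∈ c.support, monProd F d 0 0 m
        = MvPolynomial.monomial (expFacs d 0 0 (leafData m 1) 0) 1 := by
      intro m hm
      rw [monProd_eq_facs]
      exact facs_prod_eq_monomial 0 0 _ 0 (hlen m hm) (hlev m hm)
    have hinj : ∀ m ∈ c.support, degM m = degM m₀ →
        expFacs d 0 0 (leafData m 1) 0 = expFacs d 0 0 (leafData m₀ 1) 0 → m = m₀ := by
      intro m hm hdm he
      apply leafData_injective (s := 1)
      have hlm : (leafData m 1).length = (leafData m₀ 1).length := by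
        rw [leafData_length, leafData_length, hdm]
      apply List.ext_getElem hlm
      intro j hj hj'
      have hjd : (0:ℕ) + j + 0 < d := by
        rw [leafData_length] at hj
        have := hdeg m hm
        omega
      have hlv : ((leafData m 1)[j]'hj).2 - 1 + 0 < d :=
        hlev m hm _ (List.getElem_mem hj)
      have hpos := expFacs_pos (d := d) 0 0 (leafData m 1) 0 j hj hjd hlv
      rw [he] at hpos
      obtain ⟨j', hj'', he1, he2, he3⟩ := expFacs_support 0 0 (leafData m₀ 1) 0
        (((leafData m 1)[j]'hj).1, (⟨0 + j + 0, hjd⟩ : Fin d),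
          (⟨((leafData m 1)[j]'hj).2 - 1 + 0, hlv⟩ : Fin d)) (by omega)
      have he2' : (0:ℕ) + j + 0 = 0 + j' + 0 := he2
      have hjj : j = j' := by omega
      subst hjj
      have he1' : ((leafData m 1)[j]'hj).1 = ((leafData m₀ 1)[j]'hj'').1 := he1
      have he3' : ((leafData m 1)[j]'hj).2 - 1 + 0
          = ((leafData m₀ 1)[j]'hj'').2 - 1 + 0 := he3
      have hg1 : 1 ≤ ((leafData m 1)[j]'hj).2 :=
        (level_mem m 1 _ (List.getElem_mem hj)).1
      have hg2 : 1 ≤ ((leafData m₀ 1)[j]'hj'').2 :=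
        (level_mem m₀ 1 _ (List.getElem_mem hj'')).1
      exact Prod.ext he1' (by omega)
    have hcoeff : MvPolynomial.coeff (expFacs d 0 0 (leafData m₀ 1) 0) P = c m₀ := by
      rw [hP, MvPolynomial.coeff_sum]
      have hterm : ∀ m ∈ c.support,
          MvPolynomial.coeff (expFacs d 0 0 (leafData m₀ 1) 0)
            (c m • (if degM m₀ = 0 + degM m then monProd F d 0 0 m else 0))
          = if m = m₀ then c m else 0 := by
        intro m hm
        rw [MvPolynomial.coeff_smul]
        by_cases hdm : degM m₀ = 0 + degM m
        · rw [if_pos hdm, hmon m hm, MvPolynomial.coeff_monomial]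
          by_cases hmm0 : m = m₀
          · subst hmm0
            rw [if_pos rfl, if_pos rfl, smul_eq_mul, mul_one]
          · rw [if_neg (fun hcon => hmm0 (hinj m hm (by omega) hcon)), smul_zero,
              if_neg hmm0]
        · rw [if_neg hdm, MvPolynomial.coeff_zero, smul_zero,
            if_neg (fun hcon => hdm (by rw [hcon]; omega))]
      rw [Finset.sum_congr rfl hterm, Finset.sum_ite_eq' c.support m₀ (fun m => c m),
        if_pos hm₀]
    have hPne : P ≠ 0 := by
      intro h
      rw [h, MvPolynomial.coeff_zero] at hcoeff
      exact (Finsupp.mem_support_iff.mp hm₀) hcoeff.symm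
    have hPhom : P.IsHomogeneous (degM m₀) := by
      rw [hP]
      apply MvPolynomial.IsHomogeneous.sum
      intro m hm
      by_cases hdm : degM m₀ = 0 + degM m
      · rw [if_pos hdm, hmon m hm, MvPolynomial.smul_monomial]
        apply MvPolynomial.isHomogeneous_monomial
        rw [expFacs_degree 0 0 _ 0 (hlen m hm) (hlev m hm), leafData_length]
        omega
      · rw [if_neg hdm, smul_zero]
        exact MvPolynomial.isHomogeneous_zero _ _ _
    obtain ⟨z, hz⟩ : ∃ z : (Fin n × Fin d × Fin d) → F, MvPolynomial.eval z P ≠ 0 := by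
      by_contra hcon
      push_neg at hcon
      refine hPne (hPhom.eq_zero_of_forall_eval_eq_zero_of_le_card hcon ?_)
      exact le_trans (by exact_mod_cast Nat.cast_le.mpr hdm₀) (le_of_lt hF)
    set A : Fin n → Arr d F := fun i => mapArrEval z (Z F n d i) with hA
    have hAev : ∀ m : FreeMagma (Fin n), evalWith (· * ·) A m
        = mapArrEval z (evalWith (· * ·) (Z F n d) m) := by
      intro m
      rw [hA]
      exact evalWith_mapArrEval z m
    have hentry : evalNA A f.snd i0 jf k0 = MvPolynomial.eval z P := by
      rw [evalNA, evalNAWith, hP, map_sum, Finsupp.sum]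
      have happ : (∑ m ∈ c.support, c m • evalWith (· * ·) A m) i0 jf k0
          = ∑ m ∈ c.support, (c m • evalWith (· * ·) A m) i0 jf k0 :=
        map_sum (AddMonoidHom.mk' (fun x : Arr d F => x i0 jf k0) (fun _ _ => rfl)) _ _
      rw [show (coeffOf f.snd) = c from rfl, happ]
      apply Finset.sum_congr rfl
      intro m hm
      have hdep : (k0 : ℕ) + depthM m ≤ d := by
        show 0 + depthM m ≤ d
        have := depthM_le_degM m
        have := hdeg m hm
        omega
      rw [show (c m • evalWith (· * ·) A m) i0 jf k0
          = c m • (evalWith (· * ·) A m i0 jf k0) from rfl, hAev m,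
        show mapArrEval z (evalWith (· * ·) (Z F n d) m) i0 jf k0
          = MvPolynomial.eval z (evalWith (· * ·) (Z F n d) m i0 jf k0) from rfl,
        evalZ_entry m i0 jf k0 hdep, MvPolynomial.smul_eval]
      rfl
    have hE : evalNA A f.snd ≠ 0 := by
      intro h
      rw [h] at hentry
      exact hz (by rw [← hentry]; rfl)
    refine ⟨fun i => Unitization.inr (A i), ?_⟩
    have hbm : ∀ m : FreeMagma (Fin n),
        evalWith (· * ·) (fun i => (Unitization.inr (A i) : Unitization F (Arr d F))) m
          = Unitization.inr (evalWith (· * ·) A m) := by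
      intro m
      induction m with
      | ih1 i => rfl
      | ih2 x y ihx ihy =>
        rw [evalWith_mul', evalWith_mul', ihx, ihy, Unitization.inr_mul]
    have hNA : evalNA (fun i => (Unitization.inr (A i) : Unitization F (Arr d F))) f.snd
        = Unitization.inr (evalNA A f.snd) := by
      rw [evalNA, evalNAWith, evalNA, evalNAWith, Finsupp.sum, Finsupp.sum]
      rw [show (Unitization.inr (∑ m ∈ c.support, c m • evalWith (· * ·) A m)
            : Unitization F (Arr d F))
          = ∑ m ∈ c.support,
              (Unitization.inr (c m • evalWith (· * ·) A m) : Unitization F (Arr d F)) from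
        map_sum (AddMonoidHom.mk' (Unitization.inr)
          (fun a b => Unitization.inr_add F a b)) _ _]
      apply Finset.sum_congr rfl
      intro m hm
      rw [hbm m, Unitization.inr_smul]
    rw [evalUnit, hfst, Unitization.inl_zero, zero_add, hNA]
    intro hcon
    apply hE
    have := congrArg (fun x : Unitization F (Arr d F) => x.snd) hcon
    simpa using this


end NAPIT
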